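/- arXiv:1006.2050 — 2 statements merged into one kernel-verified Lean document; each statement's English description precedes it below -/
import Mathlib

section
/- For every integer N ≥ 2, with positive probability the final configuration (time 1) of the N-parameter frozen percolation process on the square lattice contains an open cluster of diameter exactly 2N − 1; such a cluster can be obtained by the merging of two clusters of diameter N − 1 each. -/
open MeasureTheory ProbabilityTheory Filter Set
open scoped ENNReal

namespace Frozen

/-- Vertices of the square lattice. -/
abbrev V : Type := ℤ × ℤ

/-- Nearest-neighbour adjacency on `ℤ²`. -/
def adj (v w : V) : Prop := |v.1 - w.1| + |v.2 - w.2| = 1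

/-- Edges of the square lattice, oriented rightwards or upwards so that each
(unordered) nearest-neighbour edge is represented exactly once. -/
def Edge : Type := {e : V × V // e.2 = e.1 + (1, 0) ∨ e.2 = e.1 + (0, 1)}

/-- `e` is the edge with endpoints `x` and `y`. -/
def EdgeOf (x y : V) (e : Edge) : Prop := e.1 = (x, y) ∨ e.1 = (y, x)

/-- Connectivity via a set `A` of edges. -/
def ConnIn (A : Set Edge) : V → V → Prop :=
  Relation.ReflTransGen (fun x y => ∃ e ∈ A, EdgeOf x y e)

/-- The cluster of `v` in the graph whose open edges are `A`. -/
def cluster (A : Set Edge) (v : V) : Set V := {w | ConnIn A v w}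

/-- Distance on the lattice: `|v - w| = max(|v₁-w₁|, |v₂-w₂|)`. -/
def vdist (v w : V) : ℕ := max (v.1 - w.1).natAbs (v.2 - w.2).natAbs

/-- Diameter of a set of vertices, `sup {|v-w| : v,w ∈ W}`, as an extended real. -/
noncomputable def diam (W : Set V) : ℝ≥0∞ :=
  ⨆ v ∈ W, ⨆ w ∈ W, (vdist v w : ℝ≥0∞)

/-- `F` (the set of edges that ever open) is a realization of the `N`-parameter frozen
percolation process with edge labels `τ`: an edge `e` opens (at time `τ e`) iff at that time
neither of its endpoints lies in an open cluster of diameter `≥ N`, where the edges open just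
before time `τ e` are those `f ∈ F` with `τ f < τ e`. -/
def IsFrozenEvolution (N : ℕ) (τ : Edge → ℝ) (F : Set Edge) : Prop :=
  ∀ e : Edge, e ∈ F ↔
    (diam (cluster {f ∈ F | τ f < τ e} e.1.1) < N ∧
     diam (cluster {f ∈ F | τ f < τ e} e.1.2) < N)

/-- Embedding of lattice vertices in the plane. -/
def toR2 (v : V) : ℝ × ℝ := ((v.1 : ℝ), (v.2 : ℝ))

/-- Embedding of dual lattice vertices (indexed by `ℤ²`) in the plane: `v + (1/2, 1/2)`. -/
noncomputable def dualToR2 (d : V) : ℝ × ℝ := ((d.1 : ℝ) + 1/2, (d.2 : ℝ) + 1/2)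

/-- The box `B(s) = [-s/2, s/2]²` (as a region of the plane). -/
def box (s : ℝ) : Set (ℝ × ℝ) := Icc (-s/2) (s/2) ×ˢ Icc (-s/2) (s/2)

/-- An axis-parallel rectangle `[x₁,x₂] × [y₁,y₂]`. -/
def rect (x₁ x₂ y₁ y₂ : ℝ) : Set (ℝ × ℝ) := Icc x₁ x₂ ×ˢ Icc y₁ y₂

/-- The rectangle `R`: length `(l+(b-c)/2)N`, width `εN`, whose west side is a
central subsegment of the east side of `B(cN)`. -/
def regR (b c l ε N : ℝ) : Set (ℝ × ℝ) :=
  rect (c*N/2) (c*N/2 + (l + (b - c)/2)*N) (-(ε*N)/2) (ε*N/2)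

/-- `Λ = B(bN) ∪ R`. -/
def regLam (b c l ε N : ℝ) : Set (ℝ × ℝ) := box (b*N) ∪ regR b c l ε N

/-- `Λ'`: all points of the plane at distance `≤ εN` from `Λ`
(the plane `ℝ × ℝ` carries the max-metric). -/
def regLam' (b c l ε N : ℝ) : Set (ℝ × ℝ) :=
  {p | ∃ q ∈ regLam b c l ε N, dist p q ≤ ε*N}

/-- `R'`: the leftmost part, of length `4εN`, of the rectangle of width `3εN` and
length `lN` which is the part of `Λ'` sticking out of `B((b+2ε)N)`. -/
def regR' (b ε N : ℝ) : Set (ℝ × ℝ) :=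
  rect ((b/2 + ε)*N) ((b/2 + 5*ε)*N) (-(3*ε*N/2)) (3*ε*N/2)

/-- `L₁`: the rectangle whose south side is the rightmost segment of length `εN` of the
north side of `B(cN)`, and whose north side is part of the boundary of `Λ'`. -/
def regL1 (b c ε N : ℝ) : Set (ℝ × ℝ) :=
  rect (c*N/2 - ε*N) (c*N/2) (c*N/2) ((b/2 + ε)*N)

/-- `L₂`: the mirror image of `L₁` below `B(cN)`. -/
def regL2 (b c ε N : ℝ) : Set (ℝ × ℝ) :=
  rect (c*N/2 - ε*N) (c*N/2) (-((b/2 + ε)*N)) (-(c*N/2))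

/-- A set `Γ` of vertices surrounds the vertex `v`: every infinite nearest-neighbour
path started at `v` that leaves every bounded set must meet `Γ`. -/
def Surrounds (Γ : Set V) (v : V) : Prop :=
  ∀ f : ℕ → V, f 0 = v → (∀ i, adj (f i) (f (i+1))) →
    (∀ M : ℕ, ∃ i, M ≤ vdist (f i) (0, 0)) → ∃ i, f i ∈ Γ

/-- The primal edge `e` is crossed by the dual edge between the dual vertices `d` and `d'`
(dual vertices are indexed by `ℤ²`, the dual vertex `d` sitting at `d + (1/2,1/2)`). -/
def DualCrosses (d d' : V) (e : Edge) : Prop :=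
  (d' = d + (1,0) ∧ e.1 = ((d.1+1, d.2), (d.1+1, d.2+1))) ∨
  (d = d' + (1,0) ∧ e.1 = ((d'.1+1, d'.2), (d'.1+1, d'.2+1))) ∨
  (d' = d + (0,1) ∧ e.1 = ((d.1, d.2+1), (d.1+1, d.2+1))) ∨
  (d = d' + (0,1) ∧ e.1 = ((d'.1, d'.2+1), (d'.1+1, d'.2+1)))

/-- A dual circuit `π` surrounds the vertex `v`: every infinite nearest-neighbour path
started at `v` that leaves every bounded set uses some primal edge crossed by `π`. -/
def DualSurrounds {n : ℕ} (π : ZMod n → V) (v : V) : Prop :=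
  ∀ f : ℕ → V, f 0 = v → (∀ i, adj (f i) (f (i+1))) →
    (∀ M : ℕ, ∃ i, M ≤ vdist (f i) (0, 0)) →
    ∃ i, ∃ j : ZMod n, ∃ e : Edge, EdgeOf (f i) (f (i+1)) e ∧ DualCrosses (π j) (π (j+1)) e

/-- A `t`-open lattice path (with respect to the labels `τ`). -/
def OpenPath (τ : Edge → ℝ) (t : ℝ) {k : ℕ} (p : Fin (k+1) → V) : Prop :=
  ∀ i : Fin k, ∃ e : Edge, EdgeOf (p i.castSucc) (p i.succ) e ∧ τ e < t

/-- A `t`-closed dual lattice path. -/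
def ClosedDualPath (τ : Edge → ℝ) (t : ℝ) {k : ℕ} (q : Fin (k+1) → V) : Prop :=
  ∀ i : Fin k, ∃ e : Edge, DualCrosses (q i.castSucc) (q i.succ) e ∧ t ≤ τ e

/-- A `t`-open circuit (closed path). -/
def OpenCircuit (τ : Edge → ℝ) (t : ℝ) {n : ℕ} (γ : ZMod n → V) : Prop :=
  ∀ i : ZMod n, ∃ e : Edge, EdgeOf (γ i) (γ (i+1)) e ∧ τ e < t

/-- A `t`-closed dual circuit. -/
def ClosedDualCircuit (τ : Edge → ℝ) (t : ℝ) {n : ℕ} (π : ZMod n → V) : Prop :=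
  ∀ i : ZMod n, ∃ e : Edge, DualCrosses (π i) (π (i+1)) e ∧ t ≤ τ e

/-- There is a `t`-open horizontal crossing of the rectangle `[x₁,x₂] × [y₁,y₂]`:
a `t`-open path inside the rectangle joining its left side to its right side. -/
def HorizCrossing (τ : Edge → ℝ) (t x₁ x₂ y₁ y₂ : ℝ) : Prop :=
  ∃ k : ℕ, ∃ p : Fin (k+1) → V,
    (∀ i, toR2 (p i) ∈ rect x₁ x₂ y₁ y₂) ∧ OpenPath τ t p ∧
    ((p 0).1 : ℝ) ≤ x₁ + 1 ∧ x₂ - 1 ≤ ((p (Fin.last k)).1 : ℝ)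

/-- There is a `t`-open circuit in the annulus `outer \ inner` surrounding `inner`. -/
def OpenCircuitInAnnulus (τ : Edge → ℝ) (t : ℝ) (outer inner : Set (ℝ × ℝ)) : Prop :=
  ∃ n : ℕ, 0 < n ∧ ∃ γ : ZMod n → V,
    (∀ i, toR2 (γ i) ∈ outer \ inner) ∧ OpenCircuit τ t γ ∧
    (∀ v : V, toR2 v ∈ inner → Surrounds (Set.range γ) v)

/-- There is a `t`-closed dual circuit in the annulus `outer \ inner` surrounding `inner`. -/
def ClosedDualCircuitInAnnulus (τ : Edge → ℝ) (t : ℝ) (outer inner : Set (ℝ × ℝ)) : Prop :=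
  ∃ n : ℕ, 0 < n ∧ ∃ π : ZMod n → V,
    (∀ i, dualToR2 (π i) ∈ outer \ inner) ∧ ClosedDualCircuit τ t π ∧
    (∀ v : V, toR2 v ∈ inner → DualSurrounds π v)

/-! ### Auxiliary development for `statement3` -/

section Aux

/-- The rightward horizontal edge from `(i,0)` to `(i+1,0)`. -/
def mkH (i : ℤ) : Edge := ⟨((i,0),(i+1,0)), Or.inl rfl⟩

/-- The upward vertical edge from `(i,0)` to `(i,1)`. -/
def mkV (i : ℤ) : Edge := ⟨((i,0),(i,1)), Or.inr (by simp)⟩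

/-- The upward vertical edge from `(i,-1)` to `(i,0)`. -/
def mkV' (i : ℤ) : Edge := ⟨((i,-1),(i,0)), Or.inr (by simp)⟩

instance : DecidableEq Edge := fun a b => decidable_of_iff _ Subtype.ext_iff.symm

/-- A horizontal segment of vertices. -/
def seg (a b : ℤ) : Set V := {v | v.2 = 0 ∧ a ≤ v.1 ∧ v.1 ≤ b}

/-- Edges of the horizontal path from `(0,0)` to `(2N-1,0)`. -/
def PathE (N : ℕ) (e : Edge) : Prop :=
  ∃ i : ℤ, 0 ≤ i ∧ i ≤ 2*(N:ℤ) - 2 ∧ e.1 = ((i,0),(i+1,0))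

/-- The middle edge of the path. -/
def emid (N : ℕ) : Edge := mkH ((N:ℤ) - 1)

/-- `e` has an endpoint on the path. -/
def Touches (N : ℕ) (e : Edge) : Prop :=
  e.1.1 ∈ seg 0 (2*(N:ℤ)-1) ∨ e.1.2 ∈ seg 0 (2*(N:ℤ)-1)

/-- Boundary edges of the path. -/
def BdryE (N : ℕ) (e : Edge) : Prop := Touches N e ∧ ¬ PathE N e

lemma mkH_inj {i j : ℤ} (h : mkH i = mkH j) : i = j := by
  simpa [mkH, Prod.ext_iff] using congrArg (fun e : Edge => e.1.1.1) h

lemma pathE_touches {N : ℕ} {e : Edge} (h : PathE N e) : Touches N e := by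
  obtain ⟨i, hi0, hi1, he⟩ := h
  left
  rw [he]
  exact ⟨rfl, hi0, show i ≤ 2*(N:ℤ)-1 by omega⟩

lemma pathE_mkH {N : ℕ} {i : ℤ} (h0 : 0 ≤ i) (h1 : i ≤ 2*(N:ℤ) - 2) : PathE N (mkH i) :=
  ⟨i, h0, h1, rfl⟩

lemma connIn_symm {A : Set Edge} {v w : V} (h : ConnIn A v w) : ConnIn A w v :=
  by
    haveI : Std.Symm (fun x y : V => ∃ e ∈ A, EdgeOf x y e) :=
      ⟨fun _ _ ⟨e, he, hxy⟩ => ⟨e, he, Or.symm hxy⟩⟩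
    exact Std.Symm.symm (r := Relation.ReflTransGen (fun x y : V => ∃ e ∈ A, EdgeOf x y e)) _ _ h

lemma cluster_subset {A : Set Edge} {W : Set V}
    (h : ∀ x ∈ W, ∀ y : V, (∃ e ∈ A, EdgeOf x y e) → y ∈ W) {v : V} (hv : v ∈ W) :
    cluster A v ⊆ W := by
  intro w hw
  simp only [cluster, mem_setOf_eq, ConnIn] at hw
  induction hw with
  | refl => exact hv
  | tail _ hstep ih => exact h _ ih _ hstep

lemma step_core {N : ℕ} {A : Set Edge} {x y : V} (hx : x ∈ seg 0 (2*(N:ℤ)-1))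
    (hA : ∀ f ∈ A, ¬BdryE N f) (hstep : ∃ e ∈ A, EdgeOf x y e) :
    ∃ i : ℤ, 0 ≤ i ∧ i ≤ 2*(N:ℤ) - 2 ∧ mkH i ∈ A ∧
      ((x = ((i,0):V) ∧ y = ((i+1,0):V)) ∨ (x = ((i+1,0):V) ∧ y = ((i,0):V))) := by
  obtain ⟨e, heA, hxy⟩ := hstep
  have hp : PathE N e := by
    by_contra hnp
    refine hA e heA ⟨?_, hnp⟩
    rcases hxy with h | h
    · left; rw [h]; exact hx
    · right; rw [h]; exact hx
  obtain ⟨i, hi0, hi1, he1⟩ := hp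
  have hmk : mkH i = e := Subtype.ext he1.symm
  rcases hxy with h | h
  · have h2 := h.symm.trans he1
    rw [Prod.mk.injEq] at h2
    exact ⟨i, hi0, hi1, hmk ▸ heA, Or.inl ⟨h2.1, h2.2⟩⟩
  · have h2 := h.symm.trans he1
    rw [Prod.mk.injEq] at h2
    exact ⟨i, hi0, hi1, hmk ▸ heA, Or.inr ⟨h2.2, h2.1⟩⟩

lemma closed_seg {N : ℕ} {A : Set Edge} (hA : ∀ f ∈ A, ¬BdryE N f) :
    ∀ x ∈ seg 0 (2*(N:ℤ)-1), ∀ y : V, (∃ e ∈ A, EdgeOf x y e) → y ∈ seg 0 (2*(N:ℤ)-1) := by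
  intro x hx y hstep
  obtain ⟨i, hi0, hi1, _, hc⟩ := step_core hx hA hstep
  obtain ⟨hx2, hx0, hx1⟩ := hx
  rcases hc with ⟨hx', hy⟩ | ⟨hx', hy⟩ <;> subst hx' hy <;>
    exact ⟨rfl, by omega, by omega⟩

lemma closed_left {N : ℕ} {A : Set Edge} (hA : ∀ f ∈ A, ¬BdryE N f) (hm : emid N ∉ A) :
    ∀ x ∈ seg 0 ((N:ℤ)-1), ∀ y : V, (∃ e ∈ A, EdgeOf x y e) → y ∈ seg 0 ((N:ℤ)-1) := by
  intro x hx y hstep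
  obtain ⟨hx2, hx0, hx1⟩ := hx
  have hx' : x ∈ seg 0 (2*(N:ℤ)-1) := ⟨hx2, hx0, by omega⟩
  obtain ⟨i, hi0, hi1, hmem, hc⟩ := step_core hx' hA hstep
  rcases hc with ⟨hxe, hy⟩ | ⟨hxe, hy⟩ <;> subst hxe hy
  · have hne : i ≠ (N:ℤ) - 1 := by
      intro h
      exact hm (by rw [emid, ← h]; exact hmem)
    exact ⟨rfl, by omega, by omega⟩
  · exact ⟨rfl, by omega, by omega⟩

lemma closed_right {N : ℕ} {A : Set Edge} (hA : ∀ f ∈ A, ¬BdryE N f) (hm : emid N ∉ A) :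
    ∀ x ∈ seg (N:ℤ) (2*(N:ℤ)-1), ∀ y : V, (∃ e ∈ A, EdgeOf x y e) → y ∈ seg (N:ℤ) (2*(N:ℤ)-1) := by
  intro x hx y hstep
  obtain ⟨hx2, hx0, hx1⟩ := hx
  have hx' : x ∈ seg 0 (2*(N:ℤ)-1) := ⟨hx2, by omega, hx1⟩
  obtain ⟨i, hi0, hi1, hmem, hc⟩ := step_core hx' hA hstep
  rcases hc with ⟨hxe, hy⟩ | ⟨hxe, hy⟩ <;> subst hxe hy
  · exact ⟨rfl, by omega, by omega⟩
  · have hne : i ≠ (N:ℤ) - 1 := by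
      intro h
      exact hm (by rw [emid, ← h]; exact hmem)
    exact ⟨rfl, by omega, by omega⟩

lemma conn_seg {A : Set Edge} (a : ℤ) :
    ∀ n : ℕ, (∀ i : ℤ, a ≤ i → i < a + n → mkH i ∈ A) → ConnIn A (a,0) (a+(n:ℤ),0) := by
  intro n
  induction n with
  | zero =>
    intro _
    simp only [Nat.cast_zero, add_zero]
    exact Relation.ReflTransGen.refl
  | succ n ih =>
    intro h
    have h1 : ConnIn A (a,0) (a+(n:ℤ),0) := ih (fun i hi hi' => h i hi (by push_cast; omega))
    have h2 : mkH (a+(n:ℤ)) ∈ A := h (a+(n:ℤ)) (by omega) (by push_cast; omega)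
    have hcast : a + ((n+1 : ℕ) : ℤ) = (a + (n:ℤ)) + 1 := by push_cast; ring
    rw [show ((a + ((n+1:ℕ):ℤ), 0) : V) = ((a + (n:ℤ)) + 1, 0) by rw [hcast]]
    exact h1.tail ⟨mkH (a+(n:ℤ)), h2, Or.inl rfl⟩

lemma conn_of_le {A : Set Edge} {a b : ℤ} (hab : a ≤ b)
    (h : ∀ i : ℤ, a ≤ i → i < b → mkH i ∈ A) : ConnIn A (a,0) (b,0) := by
  obtain ⟨n, hn⟩ := Int.le.dest hab
  subst hn
  exact conn_seg a n h

lemma conn_in_seg {A : Set Edge} {a b : ℤ} (h : ∀ i : ℤ, a ≤ i → i < b → mkH i ∈ A)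
    {v w : V} (hv : v ∈ seg a b) (hw : w ∈ seg a b) : ConnIn A v w := by
  obtain ⟨hv2, hv0, hv1⟩ := hv
  obtain ⟨hw2, hw0, hw1⟩ := hw
  have hv' : v = (v.1, 0) := Prod.ext rfl hv2
  have hw' : w = (w.1, 0) := Prod.ext rfl hw2
  rw [hv', hw']
  rcases le_total v.1 w.1 with hle | hle
  · exact conn_of_le hle (fun i h1 h2 => h i (by omega) (by omega))
  · exact connIn_symm (conn_of_le hle (fun i h1 h2 => h i (by omega) (by omega)))

lemma cluster_eq_seg {A : Set Edge} {a b : ℤ} {v : V} (hv : v ∈ seg a b)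
    (hclosed : ∀ x ∈ seg a b, ∀ y : V, (∃ e ∈ A, EdgeOf x y e) → y ∈ seg a b)
    (hconn : ∀ i : ℤ, a ≤ i → i < b → mkH i ∈ A) :
    cluster A v = seg a b :=
  Set.Subset.antisymm (cluster_subset hclosed hv) (fun _ hw => conn_in_seg hconn hv hw)

lemma diam_le_seg {W : Set V} {a b : ℤ} (h : W ⊆ seg a b) :
    diam W ≤ (((b - a).toNat : ℕ) : ℝ≥0∞) := by
  refine iSup₂_le fun v hv => iSup₂_le fun w hw => ?_
  obtain ⟨hv2, hv0, hv1⟩ := h hv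
  obtain ⟨hw2, hw0, hw1⟩ := h hw
  have : vdist v w ≤ (b - a).toNat := by
    simp only [vdist]
    omega
  exact_mod_cast Nat.cast_le.mpr this

lemma le_diam {W : Set V} {v w : V} (hv : v ∈ W) (hw : w ∈ W) :
    ((vdist v w : ℕ) : ℝ≥0∞) ≤ diam W :=
  le_iSup₂_of_le v hv (le_iSup₂_of_le w hw le_rfl)

lemma diam_seg_eq {a b : ℤ} (hab : a ≤ b) {W : Set V} (hsub : W ⊆ seg a b)
    (ha : ((a,0):V) ∈ W) (hb : ((b,0):V) ∈ W) :
    diam W = (((b - a).toNat : ℕ) : ℝ≥0∞) := by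
  refine le_antisymm (diam_le_seg hsub) ?_
  have h1 : vdist ((a,0):V) ((b,0):V) = (b - a).toNat := by
    simp only [vdist]
    omega
  rw [← h1]
  exact le_diam ha hb

end Aux

section Det

/-- The deterministic core: if the edge labels satisfy the prescribed interval conditions on
the horizontal path `(0,0) — (2N-1,0)` and its boundary, then any frozen evolution produces
the desired merged cluster. -/
lemma det (N : ℕ) (hN : 2 ≤ N) (τ : Edge → ℝ) (F : Set Edge)
    (hev : IsFrozenEvolution N τ F)
    (h1 : ∀ e, PathE N e → e ≠ emid N → τ e < 4⁻¹)
    (h2 : (4:ℝ)⁻¹ < τ (emid N)) (h2' : τ (emid N) < 2⁻¹)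
    (h3 : ∀ e, BdryE N e → 2⁻¹ < τ e) :
    ∃ v : V, diam (cluster F v) = ((2 * N - 1 : ℕ) : ℝ≥0∞) ∧
      ∃ e ∈ F, v ∈ cluster F e.1.1 ∧
        diam (cluster {f ∈ F | τ f < τ e} e.1.1) = ((N - 1 : ℕ) : ℝ≥0∞) ∧
        diam (cluster {f ∈ F | τ f < τ e} e.1.2) = ((N - 1 : ℕ) : ℝ≥0∞) ∧
        cluster F v = cluster {f ∈ F | τ f < τ e} e.1.1 ∪ cluster {f ∈ F | τ f < τ e} e.1.2 := by
  have hmidPath : PathE N (emid N) := pathE_mkH (by omega) (by omega)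
  have hpath_half : ∀ e, PathE N e → τ e < 2⁻¹ := by
    intro e hp
    rcases eq_or_ne e (emid N) with rfl | hne
    · exact h2'
    · have := h1 e hp hne; linarith [(by norm_num : (4:ℝ)⁻¹ < 2⁻¹)]
  have hpath_le_mid : ∀ e, PathE N e → τ e ≤ τ (emid N) := by
    intro e hp
    rcases eq_or_ne e (emid N) with rfl | hne
    · exact le_refl _
    · have := h1 e hp hne; linarith
  -- diam of a cluster contained in a half is < N
  have hhalf_lt : ∀ (A : Set Edge) (z : V),
      (z ∈ seg 0 ((N:ℤ)-1) ∨ z ∈ seg (N:ℤ) (2*(N:ℤ)-1)) →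
      (∀ f ∈ A, ¬BdryE N f) → emid N ∉ A →
      diam (cluster A z) < (N : ℝ≥0∞) := by
    intro A z hz hA hm
    have hlt : (((N:ℤ)-1).toNat : ℝ≥0∞) < (N : ℝ≥0∞) := by
      have h' : ((N:ℤ)-1).toNat < N := by omega
      exact_mod_cast h'
    rcases hz with hz | hz
    · have hd := diam_le_seg (cluster_subset (closed_left hA hm) hz)
      calc diam (cluster A z) ≤ ((((N:ℤ)-1-0).toNat : ℕ) : ℝ≥0∞) := hd
        _ < (N : ℝ≥0∞) := by rw [show ((N:ℤ)-1-0).toNat = ((N:ℤ)-1).toNat by omega]; exact hlt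
    · have hd := diam_le_seg (cluster_subset (closed_right hA hm) hz)
      calc diam (cluster A z) ≤ (((2*(N:ℤ)-1-(N:ℤ)).toNat : ℕ) : ℝ≥0∞) := hd
        _ < (N : ℝ≥0∞) := by rw [show (2*(N:ℤ)-1-(N:ℤ)).toNat = ((N:ℤ)-1).toNat by omega]; exact hlt
  -- Step A: every path edge opens
  have stepA : ∀ e, PathE N e → e ∈ F := by
    intro e hp
    rw [hev e]
    have hAb : ∀ f ∈ {f ∈ F | τ f < τ e}, ¬BdryE N f := by
      rintro f ⟨_, hfτ⟩ hbd
      have hb := h3 f hbd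
      have hτe : τ e < 2⁻¹ := hpath_half e hp
      linarith
    have hAm : emid N ∉ {f ∈ F | τ f < τ e} := by
      rintro ⟨_, hlt⟩
      have := hpath_le_mid e hp
      linarith
    obtain ⟨i, hi0, hi1, he1⟩ := hp
    have he11 : e.1.1 = ((i,0):V) := by rw [he1]
    have he12 : e.1.2 = ((i+1,0):V) := by rw [he1]
    constructor
    · rw [he11]
      refine hhalf_lt _ _ ?_ hAb hAm
      rcases le_or_gt i ((N:ℤ)-1) with h | h
      · exact Or.inl ⟨rfl, hi0, h⟩
      · exact Or.inr ⟨rfl, by omega, by omega⟩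
    · rw [he12]
      refine hhalf_lt _ _ ?_ hAb hAm
      rcases le_or_gt (i+1) ((N:ℤ)-1) with h | h
      · exact Or.inl ⟨rfl, by omega, h⟩
      · exact Or.inr ⟨rfl, by omega, by omega⟩
  -- all path edges, as mkH
  have hFpath : ∀ i : ℤ, 0 ≤ i → i < 2*(N:ℤ)-1 → mkH i ∈ F :=
    fun i hi0 hi1 => stepA _ (pathE_mkH hi0 (by omega))
  -- Step B: no boundary edge opens
  have stepB : ∀ e, BdryE N e → e ∉ F := by
    intro e hbd heF
    have h := (hev e).mp heF
    have hbe := h3 e hbd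
    have hpathA : ∀ i : ℤ, 0 ≤ i → i < 2*(N:ℤ)-1 → mkH i ∈ {f ∈ F | τ f < τ e} := by
      intro i hi0 hi1
      refine ⟨hFpath i hi0 hi1, ?_⟩
      have := hpath_half _ (pathE_mkH hi0 (by omega))
      linarith
    have hbig : ∀ z : V, z ∈ seg 0 (2*(N:ℤ)-1) →
        ¬ (diam (cluster {f ∈ F | τ f < τ e} z) < (N : ℝ≥0∞)) := by
      intro z hz
      have hsub : seg 0 (2*(N:ℤ)-1) ⊆ cluster {f ∈ F | τ f < τ e} z :=
        fun w hw => conn_in_seg hpathA hz hw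
      have h00 : ((0,0):V) ∈ cluster {f ∈ F | τ f < τ e} z := hsub ⟨rfl, le_refl _, by omega⟩
      have h2N : ((2*(N:ℤ)-1,0):V) ∈ cluster {f ∈ F | τ f < τ e} z :=
        hsub ⟨rfl, by omega, le_refl _⟩
      have hvd : vdist ((0,0):V) ((2*(N:ℤ)-1,0):V) = 2*N-1 := by
        simp only [vdist]
        omega
      have hle : ((2*N-1 : ℕ) : ℝ≥0∞) ≤ diam (cluster {f ∈ F | τ f < τ e} z) := by
        rw [← hvd]
        exact le_diam h00 h2N
      intro hltN
      have hNle : (N : ℝ≥0∞) ≤ ((2*N-1 : ℕ) : ℝ≥0∞) := by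
        have h' : N ≤ 2*N-1 := by omega
        exact_mod_cast h'
      exact absurd hltN (not_lt.mpr (hNle.trans hle))
    rcases hbd.1 with hS | hS
    · exact hbig _ hS h.1
    · exact hbig _ hS h.2
  have hFnb : ∀ f ∈ F, ¬BdryE N f := fun f hf hb => stepB f hb hf
  -- final cluster of (0,0)
  have hC : cluster F ((0,0):V) = seg 0 (2*(N:ℤ)-1) :=
    cluster_eq_seg ⟨rfl, le_refl _, by omega⟩ (closed_seg hFnb) hFpath
  -- the two half clusters at the merging time
  have hAmb : ∀ f ∈ {f ∈ F | τ f < τ (emid N)}, ¬BdryE N f := by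
    rintro f ⟨_, hfτ⟩ hbd
    have := h3 f hbd
    linarith
  have hAmm : emid N ∉ {f ∈ F | τ f < τ (emid N)} := by
    rintro ⟨_, hlt⟩
    exact lt_irrefl _ hlt
  have hAml : ∀ i : ℤ, 0 ≤ i → i < (N:ℤ)-1 → mkH i ∈ {f ∈ F | τ f < τ (emid N)} := by
    intro i hi0 hi1
    refine ⟨hFpath i hi0 (by omega), ?_⟩
    have hne : mkH i ≠ emid N := fun h => by have := mkH_inj h; omega
    have := h1 _ (pathE_mkH hi0 (by omega)) hne
    linarith
  have hAmr : ∀ i : ℤ, (N:ℤ) ≤ i → i < 2*(N:ℤ)-1 → mkH i ∈ {f ∈ F | τ f < τ (emid N)} := by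
    intro i hi0 hi1
    refine ⟨hFpath i (by omega) hi1, ?_⟩
    have hne : mkH i ≠ emid N := fun h => by have := mkH_inj h; omega
    have := h1 _ (pathE_mkH (by omega) (by omega)) hne
    linarith
  have hCL : cluster {f ∈ F | τ f < τ (emid N)} (((N:ℤ)-1,0):V) = seg 0 ((N:ℤ)-1) :=
    cluster_eq_seg ⟨rfl, by omega, le_refl _⟩ (closed_left hAmb hAmm) hAml
  have hCR : cluster {f ∈ F | τ f < τ (emid N)} (((N:ℤ),0):V) = seg (N:ℤ) (2*(N:ℤ)-1) :=
    cluster_eq_seg ⟨rfl, le_refl _, by omega⟩ (closed_right hAmb hAmm)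
      (fun i hi0 hi1 => hAmr i hi0 hi1)
  have he11 : (emid N).1.1 = (((N:ℤ)-1,0):V) := rfl
  have he12 : (emid N).1.2 = (((N:ℤ),0):V) := by
    show (((N:ℤ)-1)+1, (0:ℤ)) = ((N:ℤ), (0:ℤ))
    rw [Prod.mk.injEq]
    exact ⟨by ring, rfl⟩
  have hdiamL : diam (seg 0 ((N:ℤ)-1)) = ((N - 1 : ℕ) : ℝ≥0∞) := by
    rw [diam_seg_eq (by omega) (Set.Subset.refl _) ⟨rfl, le_refl _, by omega⟩
      ⟨rfl, by omega, le_refl _⟩]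
    congr 1
    omega
  have hdiamR : diam (seg (N:ℤ) (2*(N:ℤ)-1)) = ((N - 1 : ℕ) : ℝ≥0∞) := by
    rw [diam_seg_eq (by omega) (Set.Subset.refl _) ⟨rfl, le_refl _, by omega⟩
      ⟨rfl, by omega, le_refl _⟩]
    congr 1
    omega
  refine ⟨((0,0):V), ?_, emid N, stepA _ hmidPath, ?_, ?_, ?_, ?_⟩
  · rw [hC, diam_seg_eq (by omega) (Set.Subset.refl _) ⟨rfl, le_refl _, by omega⟩
      ⟨rfl, by omega, le_refl _⟩]
    congr 1
    omega
  · rw [he11]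
    have hmem : (((N:ℤ)-1,0):V) ∈ cluster F ((0,0):V) := by
      rw [hC]; exact ⟨rfl, by omega, by omega⟩
    exact connIn_symm hmem
  · rw [he11, hCL]
    exact hdiamL
  · rw [he12, hCR]
    exact hdiamR
  · rw [hC, he11, he12, hCL, hCR]
    ext ⟨v1, v2⟩
    simp only [seg, mem_setOf_eq, mem_union]
    constructor
    · rintro ⟨h0, ha, hb⟩
      rcases le_or_gt v1 ((N:ℤ)-1) with h | h
      · exact Or.inl ⟨h0, ha, h⟩
      · exact Or.inr ⟨h0, by omega, hb⟩
    · rintro (⟨h0, ha, hb⟩ | ⟨h0, ha, hb⟩) <;> exact ⟨h0, by omega, by omega⟩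

end Det

lemma touches_cases {N : ℕ} {e : Edge} (h : Touches N e) :
    (∃ a : ℤ, -1 ≤ a ∧ a ≤ 2*(N:ℤ)-1 ∧ e = mkH a) ∨
    (∃ a : ℤ, 0 ≤ a ∧ a ≤ 2*(N:ℤ)-1 ∧ e = mkV a) ∨
    (∃ a : ℤ, 0 ≤ a ∧ a ≤ 2*(N:ℤ)-1 ∧ e = mkV' a) := by
  have h' : (e.1.1.2 = 0 ∧ 0 ≤ e.1.1.1 ∧ e.1.1.1 ≤ 2*(N:ℤ)-1) ∨
      (e.1.2.2 = 0 ∧ 0 ≤ e.1.2.1 ∧ e.1.2.1 ≤ 2*(N:ℤ)-1) := h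
  rcases e.2 with hor | hver
  · have h1 : e.1.2.1 = e.1.1.1 + 1 := by rw [hor]; simp
    have h2 : e.1.2.2 = e.1.1.2 := by rw [hor]; simp
    have key : e.1.1.2 = 0 ∧ -1 ≤ e.1.1.1 ∧ e.1.1.1 ≤ 2*(N:ℤ)-1 := by
      rcases h' with ⟨hb, hl, hr⟩ | ⟨hb, hl, hr⟩ <;> exact ⟨by omega, by omega, by omega⟩
    obtain ⟨hb, hl, hr⟩ := key
    exact Or.inl ⟨e.1.1.1, hl, hr,
      Subtype.ext (Prod.ext (Prod.ext rfl hb) (Prod.ext h1 (h2.trans hb)))⟩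
  · have h1 : e.1.2.1 = e.1.1.1 := by rw [hver]; simp
    have h2 : e.1.2.2 = e.1.1.2 + 1 := by rw [hver]; simp
    rcases h' with ⟨hb, hl, hr⟩ | ⟨hb, hl, hr⟩
    · refine Or.inr (Or.inl ⟨e.1.1.1, hl, hr,
        Subtype.ext (Prod.ext (Prod.ext rfl hb) (Prod.ext ?_ ?_))⟩)
      · exact h1
      · show e.1.2.2 = 1
        omega
    · refine Or.inr (Or.inr ⟨e.1.1.1, by omega, by omega,
        Subtype.ext (Prod.ext (Prod.ext rfl ?_) (Prod.ext ?_ ?_))⟩)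
      · show e.1.1.2 = -1
        omega
      · exact h1
      · show e.1.2.2 = 0
        omega

section Iset

open Classical in
/-- The target interval for each edge label. -/
noncomputable def Iset (N : ℕ) (e : Edge) : Set ℝ :=
  if e = emid N then Ioo 4⁻¹ 2⁻¹ else if PathE N e then Ioo 0 4⁻¹
  else if BdryE N e then Ioo 2⁻¹ 1 else univ

lemma Iset_mid (N : ℕ) : Iset N (emid N) = Ioo 4⁻¹ 2⁻¹ := by
  simp [Iset]

lemma Iset_path {N : ℕ} {e : Edge} (hp : PathE N e) (hne : e ≠ emid N) :
    Iset N e = Ioo 0 4⁻¹ := by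
  simp only [Iset, if_neg hne, if_pos hp]

lemma Iset_bdry {N : ℕ} {e : Edge} (hb : BdryE N e) (hne : e ≠ emid N) :
    Iset N e = Ioo 2⁻¹ 1 := by
  simp only [Iset, if_neg hne, if_neg hb.2, if_pos hb]

lemma Iset_meas (N : ℕ) (e : Edge) : MeasurableSet (Iset N e) := by
  simp only [Iset]
  split_ifs <;> first | exact measurableSet_Ioo | exact MeasurableSet.univ

lemma Iset_vol_pos (N : ℕ) (e : Edge) : 0 < volume (Iset N e ∩ Ioo (0:ℝ) 1) := by
  simp only [Iset]
  split_ifs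
  · rw [Set.inter_eq_self_of_subset_left (Ioo_subset_Ioo (by norm_num) (by norm_num)),
      Real.volume_Ioo]
    exact ENNReal.ofReal_pos.mpr (by norm_num)
  · rw [Set.inter_eq_self_of_subset_left (Ioo_subset_Ioo (by norm_num) (by norm_num)),
      Real.volume_Ioo]
    exact ENNReal.ofReal_pos.mpr (by norm_num)
  · rw [Set.inter_eq_self_of_subset_left (Ioo_subset_Ioo (by norm_num) (by norm_num)),
      Real.volume_Ioo]
    exact ENNReal.ofReal_pos.mpr (by norm_num)
  · rw [Set.univ_inter, Real.volume_Ioo]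
    exact ENNReal.ofReal_pos.mpr (by norm_num)

end Iset

/-- For every `N ≥ 2`, with positive probability the final configuration of the
`N`-parameter frozen percolation process contains an open cluster of diameter exactly `2N - 1`,
obtained by the merging (through an edge `e`, at time `τ e`) of two clusters of diameter
`N - 1` each. -/
theorem statement3
    {Ω : Type} [MeasurableSpace Ω] (P : Measure Ω) [IsProbabilityMeasure P]
    (τ : Edge → Ω → ℝ) (hmeas : ∀ e, Measurable (τ e))
    (hindep : iIndepFun τ P)
    (hlaw : ∀ e, P.map (τ e) = MeasureTheory.volume.restrict (Set.Ioo (0:ℝ) 1))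
    (N : ℕ) (hN : 2 ≤ N)
    (F : Ω → Set Edge)
    (hF : ∀ᵐ ω ∂P, IsFrozenEvolution N (fun e => τ e ω) (F ω)) :
    0 < P {ω | ∃ v : V, diam (cluster (F ω) v) = ((2 * N - 1 : ℕ) : ℝ≥0∞) ∧
      ∃ e ∈ F ω, v ∈ cluster (F ω) e.1.1 ∧
        diam (cluster {f ∈ F ω | τ f ω < τ e ω} e.1.1) = ((N - 1 : ℕ) : ℝ≥0∞) ∧
        diam (cluster {f ∈ F ω | τ f ω < τ e ω} e.1.2) = ((N - 1 : ℕ) : ℝ≥0∞) ∧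
        cluster (F ω) v =
          cluster {f ∈ F ω | τ f ω < τ e ω} e.1.1 ∪ cluster {f ∈ F ω | τ f ω < τ e ω} e.1.2} := by
  classical
  -- the finite set of relevant edges: all edges touching the path
  set T : Finset Edge :=
    ((Finset.Icc (-1 : ℤ) (2*(N:ℤ)-1)).image mkH) ∪
    ((Finset.Icc (0 : ℤ) (2*(N:ℤ)-1)).image mkV) ∪
    ((Finset.Icc (0 : ℤ) (2*(N:ℤ)-1)).image mkV') with hTdef
  -- every edge touching the path belongs to T
  have hT : ∀ e : Edge, Touches N e → e ∈ T := by
    intro e hTch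
    rcases touches_cases hTch with ⟨a, ha1, ha2, rfl⟩ | ⟨a, ha1, ha2, rfl⟩ | ⟨a, ha1, ha2, rfl⟩
    · exact Finset.mem_union_left _ (Finset.mem_union_left _
        (Finset.mem_image.mpr ⟨a, Finset.mem_Icc.mpr ⟨ha1, ha2⟩, rfl⟩))
    · exact Finset.mem_union_left _ (Finset.mem_union_right _
        (Finset.mem_image.mpr ⟨a, Finset.mem_Icc.mpr ⟨ha1, ha2⟩, rfl⟩))
    · exact Finset.mem_union_right _
        (Finset.mem_image.mpr ⟨a, Finset.mem_Icc.mpr ⟨ha1, ha2⟩, rfl⟩)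
  have hmidPath : PathE N (emid N) := pathE_mkH (by omega) (by omega)
  -- positive probability of the finite label configuration
  have hEpos : 0 < P (⋂ e ∈ T, τ e ⁻¹' Iset N e) := by
    rw [hindep.measure_inter_preimage_eq_mul T (fun e _ => Iset_meas N e)]
    refine CanonicallyOrderedAdd.prod_pos.mpr ?_
    intro e _
    have hP : P (τ e ⁻¹' Iset N e) = volume (Iset N e ∩ Ioo 0 1) := by
      rw [← Measure.map_apply (hmeas e) (Iset_meas N e), hlaw e,
        Measure.restrict_apply (Iset_meas N e)]
    rw [hP]
    exact Iset_vol_pos N e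
  -- on the configuration, the target event holds (a.e.)
  have hsub : (⋂ e ∈ T, τ e ⁻¹' Iset N e) ≤ᵐ[P]
      {ω | ∃ v : V, diam (cluster (F ω) v) = ((2 * N - 1 : ℕ) : ℝ≥0∞) ∧
      ∃ e ∈ F ω, v ∈ cluster (F ω) e.1.1 ∧
        diam (cluster {f ∈ F ω | τ f ω < τ e ω} e.1.1) = ((N - 1 : ℕ) : ℝ≥0∞) ∧
        diam (cluster {f ∈ F ω | τ f ω < τ e ω} e.1.2) = ((N - 1 : ℕ) : ℝ≥0∞) ∧
        cluster (F ω) v =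
          cluster {f ∈ F ω | τ f ω < τ e ω} e.1.1 ∪ cluster {f ∈ F ω | τ f ω < τ e ω} e.1.2} := by
    filter_upwards [hF] with ω hω hE'
    have hE'' : ω ∈ ⋂ e ∈ T, τ e ⁻¹' Iset N e := hE'
    have hmem : ∀ e ∈ T, τ e ω ∈ Iset N e := fun e he => Set.mem_iInter₂.mp hE'' e he
    have hmid : τ (emid N) ω ∈ Ioo (4⁻¹:ℝ) 2⁻¹ := by
      have h := hmem (emid N) (hT _ (pathE_touches hmidPath))
      rwa [Iset_mid] at h
    have h1' : ∀ e, PathE N e → e ≠ emid N → τ e ω < 4⁻¹ := by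
      intro e hp hne
      have h := hmem e (hT _ (pathE_touches hp))
      rw [Iset_path hp hne] at h
      exact h.2
    have h3' : ∀ e, BdryE N e → 2⁻¹ < τ e ω := by
      intro e hb
      have hnm : e ≠ emid N := by
        rintro rfl
        exact hb.2 hmidPath
      have h := hmem e (hT _ hb.1)
      rw [Iset_bdry hb hnm] at h
      exact h.1
    exact det N hN (fun e => τ e ω) (F ω) hω h1' hmid.1 hmid.2 h3'
  exact lt_of_lt_of_le hEpos (measure_mono_ae hsub)


end Frozen
end

section
/- For every finite N and every dimension d ≥ 1, the N-parameter frozen percolation process on ℤ^d exists: for almost every realization of the i.i.d. Uniform(0,1) edge labels (τ_e), there is a unique assignment of opening times consistent with the rule that each edge e becomes open at time τ_e unless at that time at least one of its endpoints belongs to an open cluster of diameter ≥ N, in which case e remains closed forever. -/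
open MeasureTheory ProbabilityTheory Filter Set
open scoped ENNReal

namespace FrozenD

/-- Vertices of the lattice `ℤ^d`. -/
abbrev Vd (d : ℕ) : Type := Fin d → ℤ

/-- Nearest-neighbour edges of `ℤ^d`, oriented in the positive coordinate directions so that
each (unordered) edge is represented exactly once. -/
def EdgeD (d : ℕ) : Type :=
  {e : Vd d × Vd d // ∃ i : Fin d, e.2 = Function.update e.1 i (e.1 i + 1)}

/-- `e` is the edge with endpoints `x` and `y`. -/
def EdgeOfD {d : ℕ} (x y : Vd d) (e : EdgeD d) : Prop := e.1 = (x, y) ∨ e.1 = (y, x)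

/-- Connectivity via a set `A` of edges. -/
def ConnInD {d : ℕ} (A : Set (EdgeD d)) : Vd d → Vd d → Prop :=
  Relation.ReflTransGen (fun x y => ∃ e ∈ A, EdgeOfD x y e)

/-- The cluster of `v` in the graph whose open edges are `A`. -/
def clusterD {d : ℕ} (A : Set (EdgeD d)) (v : Vd d) : Set (Vd d) := {w | ConnInD A v w}

/-- The distance `|v - w| = max_i |v_i - w_i|`. -/
def vdistD {d : ℕ} (v w : Vd d) : ℕ := Finset.univ.sup fun i => (v i - w i).natAbs

/-- Diameter of a set of vertices, `sup {|v-w| : v,w ∈ W}`, as an extended real. -/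
noncomputable def diamD {d : ℕ} (W : Set (Vd d)) : ℝ≥0∞ :=
  ⨆ v ∈ W, ⨆ w ∈ W, (vdistD v w : ℝ≥0∞)

/-- `F` (the set of edges that ever open, i.e. the assignment of opening times: edge `e` opens
at time `τ e` if `e ∈ F` and stays closed forever otherwise) is consistent with the rule of the
`N`-parameter frozen percolation process with labels `τ`: an edge `e` opens at time `τ e` iff
at that time neither of its endpoints lies in an open cluster of diameter `≥ N`. -/
def IsFrozenEvolutionD {d : ℕ} (N : ℕ) (τ : EdgeD d → ℝ) (F : Set (EdgeD d)) : Prop :=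
  ∀ e : EdgeD d, e ∈ F ↔
    (diamD (clusterD {f ∈ F | τ f < τ e} e.1.1) < N ∧
     diamD (clusterD {f ∈ F | τ f < τ e} e.1.2) < N)

/-! ### auxiliary lemmas -/

variable {d : ℕ}

lemma vdist_le_iff {v w : Vd d} {K : ℕ} : vdistD v w ≤ K ↔ ∀ i, (v i - w i).natAbs ≤ K := by
  simp [vdistD, Finset.sup_le_iff]

lemma vdist_self (v : Vd d) : vdistD v v = 0 := by
  simp [vdistD]

lemma le_vdist (v w : Vd d) (i : Fin d) : (v i - w i).natAbs ≤ vdistD v w :=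
  Finset.le_sup (f := fun i => (v i - w i).natAbs) (Finset.mem_univ i)

lemma vdist_triangle (u v w : Vd d) : vdistD u w ≤ vdistD u v + vdistD v w := by
  rw [vdist_le_iff]
  intro i
  have h1 : (u i - v i).natAbs ≤ vdistD u v := le_vdist u v i
  have h2 : (v i - w i).natAbs ≤ vdistD v w := le_vdist v w i
  calc (u i - w i).natAbs = ((u i - v i) + (v i - w i)).natAbs := by ring_nf
    _ ≤ (u i - v i).natAbs + (v i - w i).natAbs := Int.natAbs_add_le _ _
    _ ≤ _ := Nat.add_le_add h1 h2

lemma edge_dist {x y : Vd d} {e : EdgeD d} (h : EdgeOfD x y e) (v : Vd d) :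
    vdistD v y ≤ vdistD v x + 1 := by
  obtain ⟨i, hi⟩ := e.2
  have key : ∀ j, (v j - y j).natAbs ≤ (v j - x j).natAbs + 1 := by
    intro j
    rcases h with h | h
    · -- x = e.1.1, y = e.1.2
      have hx : x = e.1.1 := by rw [h]
      have hy : y = Function.update x i (x i + 1) := by rw [h] at hi; simpa [← hx, h] using hi
      by_cases hj : j = i
      · subst hj
        rw [hy, Function.update_self]
        calc (v j - (x j + 1)).natAbs = ((v j - x j) - 1).natAbs := by ring_nf
          _ ≤ (v j - x j).natAbs + (1 : ℤ).natAbs := Int.natAbs_sub_le _ _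
          _ = (v j - x j).natAbs + 1 := rfl
      · rw [hy, Function.update_of_ne hj]; exact Nat.le_succ_of_le le_rfl
    · -- y = e.1.1, x = e.1.2
      have hy : y = e.1.1 := by rw [h]
      have hx : x = Function.update y i (y i + 1) := by rw [h] at hi; simpa [← hy, h] using hi
      by_cases hj : j = i
      · subst hj
        have : x j = y j + 1 := by rw [hx, Function.update_self]
        rw [this]
        calc (v j - y j).natAbs = ((v j - (y j + 1)) + 1).natAbs := by ring_nf
          _ ≤ (v j - (y j + 1)).natAbs + (1 : ℤ).natAbs := Int.natAbs_add_le _ _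
          _ = (v j - (y j + 1)).natAbs + 1 := rfl
      · rw [hx] at *; rw [Function.update_of_ne hj] at *; exact Nat.le_succ_of_le le_rfl
  rw [vdist_le_iff]
  intro j
  exact le_trans (key j) (Nat.add_le_add_right (le_vdist v x j) 1)

lemma edgeOf_symm {x y : Vd d} {e : EdgeD d} (h : EdgeOfD x y e) : EdgeOfD y x e := h.symm

lemma mem_cluster_self (A : Set (EdgeD d)) (v : Vd d) : v ∈ clusterD A v :=
  Relation.ReflTransGen.refl

lemma conn_mono {A B : Set (EdgeD d)} (h : A ⊆ B) {v w : Vd d} (hc : ConnInD A v w) :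
    ConnInD B v w :=
  Relation.ReflTransGen.mono (r := fun x y => ∃ e ∈ A, EdgeOfD x y e)
    (p := fun x y => ∃ e ∈ B, EdgeOfD x y e) (fun _ _ ⟨e, he, hxy⟩ => ⟨e, h he, hxy⟩) _ _ hc

/-- Every vertex reachable through edges with both endpoints within `K` of `v` is within `K`. -/
lemma conn_dist_le {A : Set (EdgeD d)} {v : Vd d} {K : ℕ}
    (hA : ∀ f ∈ A, vdistD v f.1.1 ≤ K ∧ vdistD v f.1.2 ≤ K) {w : Vd d}
    (h : ConnInD A v w) : vdistD v w ≤ K := by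
  induction h with
  | refl => simpa [vdist_self] using Nat.zero_le K
  | @tail b c _ step _ =>
    obtain ⟨e, he, hbc⟩ := step
    rcases hbc with hbc | hbc
    · have h2 := (hA e he).2
      rwa [show e.1.2 = c from congrArg Prod.snd hbc] at h2
    · have h2 := (hA e he).1
      rwa [show e.1.1 = c from congrArg Prod.fst hbc] at h2

/-- Edges with both endpoints within distance `N` of `v`. -/
def BallE (N : ℕ) (v : Vd d) : Set (EdgeD d) :=
  {f : EdgeD d | vdistD v f.1.1 ≤ N ∧ vdistD v f.1.2 ≤ N}

lemma explore {A : Set (EdgeD d)} {N : ℕ} {v w : Vd d} (h : ConnInD A v w) :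
    ConnInD (A ∩ BallE N v) v w ∨
      ∃ u, ConnInD (A ∩ BallE N v) v u ∧ vdistD v u = N := by
  induction h with
  | refl => exact Or.inl Relation.ReflTransGen.refl
  | @tail b c _ step ih =>
    rcases ih with hb | hu
    · have hdb : vdistD v b ≤ N :=
        conn_dist_le (fun f hf => hf.2) hb
      rcases Nat.lt_or_ge (vdistD v b) N with hlt | hge
      · obtain ⟨e, he, hbc⟩ := step
        have hdc : vdistD v c ≤ N := le_trans (edge_dist hbc v) (by omega)
        have heB : e ∈ BallE N v := by
          rcases hbc with h' | h'
          · constructor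
            · rw [show e.1.1 = b from congrArg Prod.fst h']; omega
            · rw [show e.1.2 = c from congrArg Prod.snd h']; exact hdc
          · constructor
            · rw [show e.1.1 = c from congrArg Prod.fst h']; exact hdc
            · rw [show e.1.2 = b from congrArg Prod.snd h']; omega
        exact Or.inl (hb.tail ⟨e, ⟨he, heB⟩, hbc⟩)
      · exact Or.inr ⟨b, hb, le_antisymm hdb hge⟩
    · exact Or.inr hu

lemma conn_local {A : Set (EdgeD d)} {N : ℕ} {v : Vd d}
    (hball : ∀ w, ConnInD A v w → vdistD v w ≤ N) {x : Vd d} (h : ConnInD A v x) :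
    ConnInD (A ∩ BallE N v) v x := by
  induction h with
  | refl => exact Relation.ReflTransGen.refl
  | @tail b c hvb step ih =>
    obtain ⟨e, he, hbc⟩ := step
    have hb : vdistD v b ≤ N := hball b hvb
    have hc : vdistD v c ≤ N := hball c (hvb.tail ⟨e, he, hbc⟩)
    have heB : e ∈ BallE N v := by
      rcases hbc with h' | h'
      · exact ⟨by rw [show e.1.1 = b from congrArg Prod.fst h']; exact hb,
          by rw [show e.1.2 = c from congrArg Prod.snd h']; exact hc⟩
      · exact ⟨by rw [show e.1.1 = c from congrArg Prod.fst h']; exact hc,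
          by rw [show e.1.2 = b from congrArg Prod.snd h']; exact hb⟩
    exact ih.tail ⟨e, ⟨he, heB⟩, hbc⟩

lemma diam_lt_iff {W : Set (Vd d)} {v : Vd d} (hv : v ∈ W) {N : ℕ} :
    diamD W < N ↔ ∀ x ∈ W, ∀ y ∈ W, vdistD x y < N := by
  constructor
  · intro h x hx y hy
    have hle : (vdistD x y : ℝ≥0∞) ≤ diamD W :=
      le_iSup₂_of_le x hx (le_iSup₂_of_le y hy le_rfl)
    exact_mod_cast lt_of_le_of_lt hle h
  · intro h
    rcases N with _ | M
    · exact absurd (h v hv v hv) (by simp [vdist_self])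
    · have hle : diamD W ≤ (M : ℝ≥0∞) := by
        refine iSup₂_le fun x hx => iSup₂_le fun y hy => ?_
        exact_mod_cast Nat.lt_succ_iff.mp (h x hx y hy)
      refine lt_of_le_of_lt hle ?_
      exact_mod_cast Nat.lt_succ_self M

/-- Locality of the "cluster has diameter < N" event. -/
lemma diam_cluster_local (A : Set (EdgeD d)) (v : Vd d) (N : ℕ) :
    diamD (clusterD A v) < N ↔ diamD (clusterD (A ∩ BallE N v) v) < N := by
  constructor
  · intro h
    rw [diam_lt_iff (mem_cluster_self _ _)] at *
    intro x hx y hy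
    exact h x (conn_mono inter_subset_left hx) y (conn_mono inter_subset_left hy)
  · intro h
    rw [diam_lt_iff (mem_cluster_self _ _)] at *
    intro x hx y hy
    by_contra hxy
    push_neg at hxy
    by_cases hc : ∀ w, ConnInD A v w → vdistD v w ≤ N
    · exact absurd (h x (conn_local hc hx) y (conn_local hc hy)) (by omega)
    · push_neg at hc
      obtain ⟨w, hw, hwN⟩ := hc
      rcases explore (N := N) hw with h' | ⟨u, hu, huN⟩
      · have := conn_dist_le (A := A ∩ BallE N v) (fun f hf => hf.2) h'
        omega
      · have := h v (mem_cluster_self _ _) u hu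
        omega

/-! ### The dependency relation and determinism -/

/-- `f` is spatially relevant to `e`. -/
def NearD (N : ℕ) (e f : EdgeD d) : Prop :=
  (vdistD e.1.1 f.1.1 ≤ N ∧ vdistD e.1.1 f.1.2 ≤ N) ∨
  (vdistD e.1.2 f.1.1 ≤ N ∧ vdistD e.1.2 f.1.2 ≤ N)

/-- The dependency relation: `f` has a smaller label and is spatially relevant to `e`. -/
def RelD (N : ℕ) (τ : EdgeD d → ℝ) (f e : EdgeD d) : Prop :=
  τ f < τ e ∧ NearD N e f

/-- The local version of the frozen-percolation opening condition. -/
def CondD (N : ℕ) (τ : EdgeD d → ℝ) (F : Set (EdgeD d)) (e : EdgeD d) : Prop :=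
  diamD (clusterD ({f ∈ F | τ f < τ e} ∩ BallE N e.1.1) e.1.1) < N ∧
  diamD (clusterD ({f ∈ F | τ f < τ e} ∩ BallE N e.1.2) e.1.2) < N

lemma cond_iff (N : ℕ) (τ : EdgeD d → ℝ) (F : Set (EdgeD d)) (e : EdgeD d) :
    (diamD (clusterD {f ∈ F | τ f < τ e} e.1.1) < N ∧
     diamD (clusterD {f ∈ F | τ f < τ e} e.1.2) < N) ↔ CondD N τ F e :=
  and_congr (diam_cluster_local _ _ _) (diam_cluster_local _ _ _)

lemma cond_congr {N : ℕ} {τ : EdgeD d → ℝ} {F F' : Set (EdgeD d)} {e : EdgeD d}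
    (h : ∀ f, RelD N τ f e → (f ∈ F ↔ f ∈ F')) : CondD N τ F e ↔ CondD N τ F' e := by
  have h1 : {f ∈ F | τ f < τ e} ∩ BallE N e.1.1 = {f ∈ F' | τ f < τ e} ∩ BallE N e.1.1 := by
    ext f
    simp only [mem_inter_iff, mem_sep_iff]
    constructor
    · rintro ⟨⟨hF, hτ⟩, hB⟩
      exact ⟨⟨(h f ⟨hτ, Or.inl hB⟩).1 hF, hτ⟩, hB⟩
    · rintro ⟨⟨hF, hτ⟩, hB⟩
      exact ⟨⟨(h f ⟨hτ, Or.inl hB⟩).2 hF, hτ⟩, hB⟩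
  have h2 : {f ∈ F | τ f < τ e} ∩ BallE N e.1.2 = {f ∈ F' | τ f < τ e} ∩ BallE N e.1.2 := by
    ext f
    simp only [mem_inter_iff, mem_sep_iff]
    constructor
    · rintro ⟨⟨hF, hτ⟩, hB⟩
      exact ⟨⟨(h f ⟨hτ, Or.inr hB⟩).1 hF, hτ⟩, hB⟩
    · rintro ⟨⟨hF, hτ⟩, hB⟩
      exact ⟨⟨(h f ⟨hτ, Or.inr hB⟩).2 hF, hτ⟩, hB⟩
  unfold CondD
  rw [h1, h2]

/-- If the dependency relation is well-founded, then the frozen evolution exists and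
is unique. -/
theorem existsUnique_of_wf (N : ℕ) (τ : EdgeD d → ℝ) (hwf : WellFounded (RelD N τ)) :
    ∃! F : Set (EdgeD d), IsFrozenEvolutionD N τ F := by
  set G : EdgeD d → Prop :=
    hwf.fix (fun e ih => CondD N τ {f | ∃ h : RelD N τ f e, ih f h} e) with hGdef
  have hG : ∀ e, G e ↔ CondD N τ {f | RelD N τ f e ∧ G f} e := by
    intro e
    have := hwf.fix_eq (fun e ih => CondD N τ {f | ∃ h : RelD N τ f e, ih f h} e) e
    rw [hGdef, this]
    have hset : {f | ∃ _h : RelD N τ f e, G f} = {f | RelD N τ f e ∧ G f} := by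
      ext f; exact exists_prop
    rw [← hGdef, hset]
  have hG' : ∀ e, G e ↔ CondD N τ {f | G f} e := by
    intro e
    refine (hG e).trans (cond_congr fun f hf => ?_)
    simp only [mem_setOf_eq]
    exact and_iff_right hf
  have hfrozen : IsFrozenEvolutionD N τ {f | G f} := by
    intro e
    rw [cond_iff]
    exact hG' e
  refine ⟨{f | G f}, hfrozen, ?_⟩
  intro F hF
  ext e
  induction e using hwf.induction with
  | _ e IH =>
    calc e ∈ F ↔ CondD N τ F e := (hF e).trans (cond_iff N τ F e)
      _ ↔ CondD N τ {f | G f} e := cond_congr IH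
      _ ↔ e ∈ {f | G f} := (hG' e).symm

/-! ### Probability: decreasing tuples are rare -/

/-- The set of strictly decreasing tuples. -/
def DecSet (k : ℕ) : Set (Fin k → ℝ) := {x | ∀ i j : Fin k, i < j → x j < x i}

lemma decSet_measurable (k : ℕ) : MeasurableSet (DecSet k) := by
  have : DecSet k = ⋂ (p : Fin k × Fin k) (_ : p.1 < p.2), {x : Fin k → ℝ | x p.2 < x p.1} := by
    ext x
    simp only [DecSet, mem_setOf_eq, mem_iInter]
    exact ⟨fun h p hp => h p.1 p.2 hp, fun h i j hij => h (i, j) hij⟩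
  rw [this]
  exact MeasurableSet.iInter fun p => MeasurableSet.iInter fun _ =>
    measurableSet_lt (measurable_pi_apply _) (measurable_pi_apply _)

lemma pi_dec_le (μ : Measure ℝ) [IsProbabilityMeasure μ] (k : ℕ) :
    Measure.pi (fun _ : Fin k => μ) (DecSet k) ≤ ((k).factorial : ℝ≥0∞)⁻¹ := by
  set π := Measure.pi (fun _ : Fin k => μ) with hπ
  set E : Equiv.Perm (Fin k) → Set (Fin k → ℝ) :=
    fun σ => {x | ∀ i j : Fin k, i < j → x (σ j) < x (σ i)} with hE
  have hy : ∀ (σ : Equiv.Perm (Fin k)) (x : Fin k → ℝ) (j : Fin k),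
      (MeasurableEquiv.piCongrLeft (fun _ : Fin k => ℝ) σ.symm) x j = x (σ j) := by
    intro σ x j
    have h := MeasurableEquiv.piCongrLeft_apply_apply (σ.symm) (β := fun _ : Fin k => ℝ)
      x (σ j)
    simpa using h
  have hEeq : ∀ σ : Equiv.Perm (Fin k),
      E σ = (MeasurableEquiv.piCongrLeft (fun _ : Fin k => ℝ) σ.symm) ⁻¹' DecSet k := by
    intro σ
    ext x
    simp only [hE, mem_setOf_eq, mem_preimage, DecSet, hy σ x]
  have hEπ : ∀ σ, π (E σ) = π (DecSet k) := by
    intro σ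
    rw [hEeq σ, hπ]
    exact (measurePreserving_piCongrLeft (fun _ : Fin k => μ) σ.symm).measure_preimage
      (decSet_measurable k).nullMeasurableSet
  have hmono : ∀ (σ σ' : Equiv.Perm (Fin k)) (x : Fin k → ℝ), x ∈ E σ → x ∈ E σ' →
      StrictMono (fun i => σ'.symm (σ i)) := by
    intro σ σ' x hx hx' i j hij
    have h1 : x (σ j) < x (σ i) := hx i j hij
    rcases lt_trichotomy (σ'.symm (σ i)) (σ'.symm (σ j)) with h | h | h
    · exact h
    · exact absurd (σ.injective (σ'.symm.injective h)) hij.ne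
    · have h2 := hx' _ _ h
      simp only [Equiv.apply_symm_apply] at h2
      exact absurd h1 (lt_asymm h2)
  have hdisj : Pairwise (Function.onFun Disjoint E) := by
    intro σ σ' hne
    show Disjoint (E σ) (E σ')
    rw [Set.disjoint_left]
    intro x hx hx'
    apply hne
    have hg := hmono σ σ' x hx hx'
    have hg' := hmono σ' σ x hx' hx
    have heq : ∀ i, σ'.symm (σ i) = i := by
      intro i
      have inst : WellFoundedLT (Fin k) := inferInstance
      have h1 : i ≤ σ'.symm (σ i) := hg.le_apply
      have h2 : σ'.symm (σ i) ≤ σ.symm (σ' (σ'.symm (σ i))) := hg'.le_apply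
      simp only [Equiv.apply_symm_apply] at h2
      simp only [Equiv.symm_apply_apply] at h2
      exact le_antisymm (by exact_mod_cast h2) h1
    exact Equiv.ext fun i => by
      conv_rhs => rw [← heq i, Equiv.apply_symm_apply]
  have hEmeas : ∀ σ, MeasurableSet (E σ) := fun σ => by
    rw [hEeq σ]
    exact (MeasurableEquiv.piCongrLeft (fun _ : Fin k => ℝ) σ.symm).measurable
      (decSet_measurable k)
  have hsum : ∑ σ : Equiv.Perm (Fin k), π (E σ) = π (⋃ σ ∈ (Finset.univ : Finset (Equiv.Perm (Fin k))), E σ) :=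
    (measure_biUnion_finset (fun σ _ σ' _ hne => hdisj hne) (fun σ _ => hEmeas σ)).symm
  have hle1 : ∑ σ : Equiv.Perm (Fin k), π (E σ) ≤ 1 := by
    rw [hsum]
    exact prob_le_one
  rw [Finset.sum_congr rfl (fun σ _ => hEπ σ), Finset.sum_const, Finset.card_univ,
    Fintype.card_perm, Fintype.card_fin] at hle1
  rw [ENNReal.le_inv_iff_mul_le, mul_comm]
  simpa [nsmul_eq_mul] using hle1

/-! ### Chains of the dependency relation -/

lemma vdist_zero_sub (x y : Vd d) : vdistD 0 (y - x) = vdistD x y := by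
  unfold vdistD
  refine Finset.sup_congr rfl fun j _ => ?_
  have : (0 : Vd d) j - (y - x) j = x j - y j := by
    show (0 : ℤ) - (y j - x j) = x j - y j
    ring
  rw [this]

lemma edge_self_dist (e : EdgeD d) : vdistD e.1.1 e.1.2 ≤ 1 := by
  obtain ⟨i, hi⟩ := e.2
  rw [vdist_le_iff]
  intro j
  by_cases hj : j = i
  · subst hj; rw [hi, Function.update_self]; omega
  · rw [hi, Function.update_of_ne hj]; omega

lemma near_base {N : ℕ} {e f : EdgeD d} (h : NearD N e f) :
    vdistD e.1.1 f.1.1 ≤ N + 1 := by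
  rcases h with ⟨h1, _⟩ | ⟨h1, _⟩
  · omega
  · have := vdist_triangle e.1.1 e.1.2 f.1.1
    have := edge_self_dist e
    omega

lemma ball_finite (v : Vd d) (M : ℕ) : {w : Vd d | vdistD v w ≤ M}.Finite := by
  refine Set.Finite.subset (Set.Finite.pi (fun j => Set.finite_Icc (v j - M) (v j + M))) ?_
  intro w hw
  rw [Set.mem_setOf_eq, vdist_le_iff] at hw
  intro j _
  have := hw j
  simp only [mem_Icc]
  omega

/-- The direction of an edge. -/
noncomputable def dirD (f : EdgeD d) : Fin d := f.2.choose

lemma dir_spec (f : EdgeD d) :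
    f.1.2 = Function.update f.1.1 (dirD f) (f.1.1 (dirD f) + 1) := f.2.choose_spec

/-- Near-chains of edges starting at `e₀`. -/
def ChainsSet (N : ℕ) (e₀ : EdgeD d) (n : ℕ) : Set (Fin (n + 1) → EdgeD d) :=
  {c | c 0 = e₀ ∧ ∀ i : Fin n, NearD N (c i.castSucc) (c i.succ)}

/-- The step-code of a chain. -/
noncomputable def codeD {n : ℕ} (c : Fin (n + 1) → EdgeD d) : Fin n → Vd d × Fin d :=
  fun i => ((c i.succ).1.1 - (c i.castSucc).1.1, dirD (c i.succ))

/-- The finite set of possible step-codes. -/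
def KSet (N : ℕ) : Set (Vd d × Fin d) := {p | vdistD 0 p.1 ≤ N + 1}

lemma KSet_finite (N : ℕ) : (KSet (d := d) N).Finite := by
  refine Set.Finite.subset ((ball_finite 0 (N + 1)).prod (Set.finite_univ (α := Fin d))) ?_
  intro p hp
  exact ⟨hp, mem_univ _⟩

lemma code_mapsTo {N n : ℕ} {e₀ : EdgeD d} {c : Fin (n + 1) → EdgeD d}
    (hc : c ∈ ChainsSet N e₀ n) (i : Fin n) : codeD c i ∈ KSet (d := d) N := by
  have h := near_base (hc.2 i)
  show vdistD 0 ((c i.succ).1.1 - (c i.castSucc).1.1) ≤ N + 1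
  rw [vdist_zero_sub]
  exact h

lemma code_injOn {N n : ℕ} {e₀ : EdgeD d} :
    Set.InjOn (codeD (d := d)) (ChainsSet N e₀ n) := by
  intro c hc c' hc' hcode
  have key : ∀ m (hm : m < n + 1), c ⟨m, hm⟩ = c' ⟨m, hm⟩ := by
    intro m
    induction m with
    | zero =>
      intro hm
      have h0 : (⟨0, hm⟩ : Fin (n + 1)) = 0 := rfl
      rw [h0, hc.1, hc'.1]
    | succ m IH =>
      intro hm
      have hmn : m < n := by omega
      set i : Fin n := ⟨m, hmn⟩ with hi
      have hcs : i.castSucc = ⟨m, by omega⟩ := rfl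
      have hsc : i.succ = ⟨m + 1, by omega⟩ := rfl
      have hci := congrFun hcode i
      simp only [codeD, hcs, hsc] at hci
      have h1 : ((c ⟨m + 1, hm⟩).1.1 - (c ⟨m, by omega⟩).1.1, dirD (c ⟨m + 1, hm⟩)) =
          ((c' ⟨m + 1, hm⟩).1.1 - (c' ⟨m, by omega⟩).1.1, dirD (c' ⟨m + 1, hm⟩)) := hci
    
      have hIH := IH (by omega)
      rw [Prod.mk.injEq] at h1
      obtain ⟨hfst, hsnd⟩ := h1
      rw [hIH] at hfst
      have hbase : (c ⟨m + 1, hm⟩).1.1 = (c' ⟨m + 1, hm⟩).1.1 := by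
        have := sub_left_inj.mp hfst
        exact this
      have hsub : (c ⟨m + 1, hm⟩).1.2 = (c' ⟨m + 1, hm⟩).1.2 := by
        rw [dir_spec (c ⟨m + 1, hm⟩), dir_spec (c' ⟨m + 1, hm⟩), hbase, hsnd]
      exact Subtype.ext (Prod.ext hbase hsub)
  funext i
  have := key i.val i.isLt
  simpa [Fin.eta] using this

lemma chains_finite (N : ℕ) (e₀ : EdgeD d) (n : ℕ) : (ChainsSet N e₀ n).Finite := by
  have hpi : ({g : Fin n → Vd d × Fin d | ∀ i, g i ∈ KSet (d := d) N}).Finite := by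
    refine Set.Finite.subset (Set.Finite.pi (fun _ : Fin n => KSet_finite N)) ?_
    intro g hg i _
    exact hg i
  exact Set.Finite.of_finite_image
    (Set.Finite.subset hpi (by rintro _ ⟨c, hc, rfl⟩; exact fun i => code_mapsTo hc i))
    code_injOn

lemma chains_card_le (N : ℕ) (e₀ : EdgeD d) (n : ℕ) :
    (chains_finite N e₀ n).toFinset.card ≤ (KSet_finite (d := d) N).toFinset.card ^ n := by
  classical
  have h := Finset.card_le_card_of_injOn (codeD (d := d))
    (t := Fintype.piFinset fun _ : Fin n => (KSet_finite (d := d) N).toFinset)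
    (fun c hc => by
      rw [Finset.mem_coe, Fintype.mem_piFinset]
      intro i
      rw [Set.Finite.mem_toFinset]
      exact code_mapsTo ((chains_finite N e₀ n).mem_toFinset.mp hc) i)
    (fun c hc c' hc' h =>
      code_injOn ((chains_finite N e₀ n).mem_toFinset.mp hc)
        ((chains_finite N e₀ n).mem_toFinset.mp hc') h)
  rwa [Fintype.card_piFinset, Finset.prod_const, Finset.card_univ, Fintype.card_fin] at h

/-- Adjacent decrease implies full decrease. -/
lemma desc_full {n : ℕ} {x : Fin (n + 1) → ℝ} (h : ∀ i : Fin n, x i.succ < x i.castSucc) :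
    x ∈ DecSet (n + 1) := by
  have key : ∀ jv (hj : jv < n + 1) iv (hi : iv < n + 1), iv < jv →
      x ⟨jv, hj⟩ < x ⟨iv, hi⟩ := by
    intro jv
    induction jv with
    | zero => intro _ _ _ h'; exact absurd h' (Nat.not_lt_zero _)
    | succ m IH =>
      intro hj iv hi hlt
      have hmn : m < n := by omega
      have hadj : x ⟨m + 1, hj⟩ < x ⟨m, by omega⟩ := by
        have := h ⟨m, hmn⟩
        simpa [Fin.succ_mk, Fin.castSucc_mk] using this
      rcases Nat.lt_or_ge iv m with hlt' | hge
      · exact lt_trans hadj (IH (by omega) iv hi hlt')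
      · have : iv = m := by omega
        subst this
        exact hadj
  intro i j hij
  have := key j.val j.isLt i.val i.isLt hij
  simpa [Fin.eta] using this

/-- If there is no descending chain of length `n` from `e`, then `e` is accessible. -/
lemma acc_of_no_chain {N : ℕ} {τ : EdgeD d → ℝ} :
    ∀ (n : ℕ) (e : EdgeD d),
      (¬ ∃ c : Fin (n + 1) → EdgeD d, c 0 = e ∧
        ∀ i : Fin n, RelD N τ (c i.succ) (c i.castSucc)) →
      Acc (RelD N τ) e := by
  intro n
  induction n with
  | zero =>
    intro e h
    exact absurd ⟨fun _ => e, rfl, fun i => i.elim0⟩ h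
  | succ n IH =>
    intro e h
    constructor
    intro f hf
    apply IH
    rintro ⟨c, hc0, hchain⟩
    apply h
    set cc : Fin (n + 2) → EdgeD d :=
      (fun j => if h0 : j.val = 0 then e else c ⟨j.val - 1, by omega⟩) with hcc
    refine ⟨cc, by simp [hcc], ?_⟩
    intro i
    have hsucc : cc i.succ = c ⟨i.val, i.isLt⟩ := by
      rw [hcc]
      simp only
      rw [dif_neg (by simp [Fin.val_succ])]
      exact congrArg c (Fin.ext (by simp [Fin.val_succ]))
    by_cases h0 : i.val = 0
    · have hcast : cc i.castSucc = e := by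
        rw [hcc]
        simp only
        rw [dif_pos (by simp [Fin.coe_castSucc, h0])]
      rw [hsucc, hcast]
      have h1 : (⟨i.val, i.isLt⟩ : Fin (n + 1)) = 0 := Fin.ext (by simp [h0])
      rw [h1, hc0]
      exact hf
    · have hcast : cc i.castSucc = c ⟨i.val - 1, by have := i.isLt; omega⟩ := by
        rw [hcc]
        simp only
        rw [dif_neg (by simp [Fin.coe_castSucc, h0])]
        exact congrArg c (Fin.ext (by simp [Fin.coe_castSucc]))
      rw [hsucc, hcast]
      obtain ⟨m, hm⟩ : ∃ m, i.val = m + 1 := ⟨i.val - 1, by omega⟩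
      have him : m < n := by have := i.isLt; omega
      have hch := hchain ⟨m, him⟩
      simp only [Fin.succ_mk, Fin.castSucc_mk] at hch
      have e1 : (⟨i.val, i.isLt⟩ : Fin (n + 1)) = ⟨m + 1, by omega⟩ := Fin.ext (by simp; omega)
      have e2 : (⟨i.val - 1, by have := i.isLt; omega⟩ : Fin (n + 1)) = ⟨m, by omega⟩ :=
        Fin.ext (by simp; omega)
      rw [e1, e2]
      exact hch

instance (d : ℕ) : Countable (EdgeD d) :=
  inferInstanceAs (Countable {e : Vd d × Vd d // ∃ i : Fin d, e.2 = Function.update e.1 i (e.1 i + 1)})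

/-! ### Probability assembly -/

section Probability

variable {Ω : Type} [MeasurableSpace Ω]

lemma map_tuple_eq_pi {P : Measure Ω} (τ : EdgeD d → Ω → ℝ)
    (hmeas : ∀ e, Measurable (τ e))
    (hindep : iIndepFun τ P)
    (μ : Measure ℝ) [SigmaFinite μ] (hlaw : ∀ e, P.map (τ e) = μ)
    {k : ℕ} (c : Fin k → EdgeD d) (hc : Function.Injective c) :
    P.map (fun ω (i : Fin k) => τ (c i) ω) = Measure.pi (fun _ : Fin k => μ) := by
  classical
  refine (Measure.pi_eq fun s hs => ?_).symm
  have hvec : Measurable (fun ω (i : Fin k) => τ (c i) ω) :=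
    measurable_pi_lambda _ fun i => hmeas _
  rw [Measure.map_apply hvec (MeasurableSet.univ_pi hs)]
  set g : EdgeD d → Set ℝ := fun e => ⋂ (i : Fin k) (_ : c i = e), s i with hg
  have hgc : ∀ i, g (c i) = s i := by
    intro i
    show (⋂ (j : Fin k) (_ : c j = c i), s j) = s i
    refine le_antisymm (Set.iInter₂_subset (s := fun j (_ : c j = c i) => s j) i rfl)
      (subset_iInter₂ fun j hj => ?_)
    cases hc hj
    exact le_rfl
  have hgm : ∀ e, MeasurableSet (g e) := fun e =>
    MeasurableSet.iInter fun i => MeasurableSet.iInter fun _ => hs i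
  have hpre : (fun ω (i : Fin k) => τ (c i) ω) ⁻¹' (Set.univ.pi s)
      = ⋂ e ∈ Finset.image c Finset.univ, τ e ⁻¹' g e := by
    ext ω
    rw [mem_preimage, Set.mem_univ_pi]
    constructor
    · intro h
      rw [Set.mem_iInter₂]
      intro e _
      rw [mem_preimage, hg]
      simp only [Set.mem_iInter]
      intro ii hii
      subst hii
      exact h ii
    · intro h i
      have h2 := Set.mem_iInter₂.mp h (c i) (Finset.mem_image.mpr ⟨i, Finset.mem_univ i, rfl⟩)
      rw [mem_preimage, hg] at h2
      simp only [Set.mem_iInter] at h2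
      exact h2 i rfl
  rw [hpre, hindep.measure_inter_preimage_eq_mul _ (fun e _ => hgm e)]
  rw [Finset.prod_image (fun i _ j _ h => hc h)]
  refine Finset.prod_congr rfl fun i _ => ?_
  rw [hgc i, ← Measure.map_apply (hmeas _) (hs i), hlaw]

lemma chain_prob_le {P : Measure Ω} [IsProbabilityMeasure P] (τ : EdgeD d → Ω → ℝ)
    (hmeas : ∀ e, Measurable (τ e))
    (hindep : iIndepFun τ P)
    (μ : Measure ℝ) [IsProbabilityMeasure μ] (hlaw : ∀ e, P.map (τ e) = μ)
    {n : ℕ} (c : Fin (n + 1) → EdgeD d) :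
    P {ω | ∀ i : Fin n, τ (c i.succ) ω < τ (c i.castSucc) ω}
      ≤ (((n + 1).factorial : ℝ≥0∞))⁻¹ := by
  by_cases hc : Function.Injective c
  · set A : Set (Fin (n + 1) → ℝ) := {x | ∀ i : Fin n, x i.succ < x i.castSucc} with hA
    have hAm : MeasurableSet A := by
      have : A = ⋂ i : Fin n, {x : Fin (n + 1) → ℝ | x i.succ < x i.castSucc} := by
        ext x; simp [hA, Set.mem_iInter]
      rw [this]
      exact MeasurableSet.iInter fun i =>
        measurableSet_lt (measurable_pi_apply _) (measurable_pi_apply _)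
    have hvec : Measurable (fun ω (i : Fin (n + 1)) => τ (c i) ω) :=
      measurable_pi_lambda _ fun i => hmeas _
    have hev : {ω | ∀ i : Fin n, τ (c i.succ) ω < τ (c i.castSucc) ω}
        = (fun ω (i : Fin (n + 1)) => τ (c i) ω) ⁻¹' A := rfl
    rw [hev, ← Measure.map_apply hvec hAm,
      map_tuple_eq_pi τ hmeas hindep μ hlaw c hc]
    refine le_trans (measure_mono ?_) (pi_dec_le μ (n + 1))
    intro x hx
    exact desc_full hx
  · rw [Function.not_injective_iff] at hc
    obtain ⟨a, b, hab, hne⟩ := hc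
    have : {ω | ∀ i : Fin n, τ (c i.succ) ω < τ (c i.castSucc) ω} = ∅ := by
      ext ω
      simp only [mem_setOf_eq, mem_empty_iff_false, iff_false]
      intro hω
      have hx := desc_full (x := fun i => τ (c i) ω) hω
      rcases hne.lt_or_gt with h | h
      · have h2 : τ (c b) ω < τ (c a) ω := hx a b h
        rw [hab] at h2
        exact lt_irrefl _ h2
      · have h2 : τ (c a) ω < τ (c b) ω := hx b a h
        rw [hab] at h2
        exact lt_irrefl _ h2
    rw [this]
    simp

lemma not_acc_null {P : Measure Ω} [IsProbabilityMeasure P] (N : ℕ) (τ : EdgeD d → Ω → ℝ)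
    (hmeas : ∀ e, Measurable (τ e))
    (hindep : iIndepFun τ P)
    (μ : Measure ℝ) [IsProbabilityMeasure μ] (hlaw : ∀ e, P.map (τ e) = μ)
    (e₀ : EdgeD d) :
    P {ω | ¬ Acc (RelD N (fun e => τ e ω)) e₀} = 0 := by
  classical
  set T := {ω | ¬ Acc (RelD N (fun e => τ e ω)) e₀} with hT
  set C : ℕ := (KSet_finite (d := d) N).toFinset.card with hC
  have hEv : ∀ n : ℕ, P T ≤ (C : ℝ≥0∞) ^ n * (((n + 1).factorial : ℝ≥0∞))⁻¹ := by
    intro n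
    have hsub : T ⊆ ⋃ c ∈ (chains_finite N e₀ n).toFinset,
        {ω | ∀ i : Fin n, τ (c i.succ) ω < τ (c i.castSucc) ω} := by
      intro ω hω
      rw [hT, mem_setOf_eq] at hω
      by_contra hU
      apply hω
      apply acc_of_no_chain n
      rintro ⟨c, hc0, hchain⟩
      apply hU
      rw [mem_iUnion₂]
      refine ⟨c, ?_, fun i => (hchain i).1⟩
      rw [Set.Finite.mem_toFinset]
      exact ⟨hc0, fun i => (hchain i).2⟩
    refine le_trans (measure_mono hsub) ?_
    refine le_trans (measure_biUnion_finset_le _ _) ?_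
    refine le_trans (Finset.sum_le_card_nsmul _ _ ((((n + 1).factorial : ℝ≥0∞))⁻¹)
      (fun c _ => chain_prob_le τ hmeas hindep μ hlaw c)) ?_
    rw [nsmul_eq_mul]
    refine mul_le_mul' ?_ le_rfl
    have hcard := chains_card_le N e₀ n
    calc ((chains_finite N e₀ n).toFinset.card : ℝ≥0∞) ≤ ((C ^ n : ℕ) : ℝ≥0∞) := by
          exact_mod_cast hcard
      _ = (C : ℝ≥0∞) ^ n := by push_cast; ring
  have hfin : P T ≠ ⊤ := measure_ne_top P T
  have hreal : ∀ n, (P T).toReal ≤ (C : ℝ) ^ n / (n.factorial : ℝ) := by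
    intro n
    have hne : (C : ℝ≥0∞) ^ n * (((n + 1).factorial : ℝ≥0∞))⁻¹ ≠ ⊤ := by
      apply ENNReal.mul_ne_top
      · exact ENNReal.pow_ne_top (ENNReal.natCast_ne_top C)
      · refine ENNReal.inv_ne_top.mpr ?_
        exact_mod_cast Nat.factorial_pos (n + 1) |>.ne'
    have h1 := ENNReal.toReal_mono hne (hEv n)
    have h2 : ((C : ℝ≥0∞) ^ n * (((n + 1).factorial : ℝ≥0∞))⁻¹).toReal
        = (C : ℝ) ^ n * (((n + 1).factorial : ℝ))⁻¹ := by
      rw [ENNReal.toReal_mul, ENNReal.toReal_pow, ENNReal.toReal_inv]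
      simp
    rw [h2] at h1
    refine le_trans h1 ?_
    rw [div_eq_mul_inv]
    refine mul_le_mul_of_nonneg_left ?_ (by positivity)
    refine inv_anti₀ (by exact_mod_cast Nat.factorial_pos n) ?_
    exact_mod_cast Nat.factorial_le (Nat.le_succ n)
  have h0 : (P T).toReal ≤ 0 :=
    ge_of_tendsto (FloorSemiring.tendsto_pow_div_factorial_atTop (C : ℝ))
      (Filter.Eventually.of_forall hreal)
  have hz : (P T).toReal = 0 := le_antisymm h0 ENNReal.toReal_nonneg
  rcases (ENNReal.toReal_eq_zero_iff _).mp hz with h | h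
  · exact h
  · exact absurd h hfin

end Probability

/-- For every finite `N` and every dimension `d ≥ 1`, the `N`-parameter frozen
percolation process on `ℤ^d` exists: for almost every realization of the i.i.d. `Uniform(0,1)`
edge labels `τ`, there is a unique assignment of opening times consistent with the frozen
percolation rule. -/
theorem statement7 (d : ℕ) (hd : 1 ≤ d) (N : ℕ)
    {Ω : Type} [MeasurableSpace Ω] (P : Measure Ω) [IsProbabilityMeasure P]
    (τ : EdgeD d → Ω → ℝ) (hmeas : ∀ e, Measurable (τ e))
    (hindep : iIndepFun τ P)
    (hlaw : ∀ e, P.map (τ e) = MeasureTheory.volume.restrict (Set.Ioo (0:ℝ) 1)) :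
    ∀ᵐ ω ∂P, ∃! F : Set (EdgeD d), IsFrozenEvolutionD N (fun e => τ e ω) F := by
  classical
  haveI hμ : IsProbabilityMeasure (MeasureTheory.volume.restrict (Set.Ioo (0:ℝ) 1)) := by
    constructor
    rw [Measure.restrict_apply_univ]
    simp [Real.volume_Ioo]
  have hae : ∀ᵐ ω ∂P, ∀ e₀ : EdgeD d, Acc (RelD N (fun e => τ e ω)) e₀ := by
    rw [ae_iff]
    have heq : {ω | ¬ ∀ e₀ : EdgeD d, Acc (RelD N (fun e => τ e ω)) e₀}
        = ⋃ e₀ : EdgeD d, {ω | ¬ Acc (RelD N (fun e => τ e ω)) e₀} := by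
      ext ω
      simp [not_forall]
    rw [heq]
    exact measure_iUnion_null fun e₀ =>
      not_acc_null N τ hmeas hindep (MeasureTheory.volume.restrict (Set.Ioo (0:ℝ) 1)) hlaw e₀
  filter_upwards [hae] with ω hω
  exact existsUnique_of_wf N (fun e => τ e ω) ⟨hω⟩


end FrozenD
end
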